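/- Let 1 < q < 3 be real, let b = sqrt(2/(3-q)) and ν = (3-q)/(q-1). Then the function x ↦ (1 + (q-1)·x²/2)^(-1/(q-1)) is integrable on ℝ and its integral equals b·sqrt(ν·π)·Γ(ν/2)/Γ((ν+1)/2), where Γ denotes the Gamma function. Consequently the normalization constant of the standard Tsallis q-Gaussian with 1 < q < 3 is C = Γ((ν+1)/2)/(b·sqrt(ν·π)·Γ(ν/2)). -/

import Mathlib

open Real MeasureTheory Set

lemma my_integrable_one_add_sq_rpow {s : ℝ} (hs : 1/2 < s) :
    Integrable (fun x : ℝ => (1 + x ^ 2) ^ (-s)) := by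
  have h := integrable_rpow_neg_one_add_norm_sq (E := ℝ) (μ := volume) (r := 2*s)
    (by simp; linarith)
  have : (fun x : ℝ => ((1:ℝ) + ‖x‖ ^ 2) ^ (-(2*s) / 2)) =
      fun x : ℝ => (1 + x ^ 2) ^ (-s) := by
    funext x
    rw [Real.norm_eq_abs, sq_abs]
    ring_nf
  rwa [this] at h

lemma my_key {s : ℝ} (hs : 1/2 < s)
    (hint : Integrable (fun x : ℝ => (1 + x ^ 2) ^ (-s))) :
    (∫ x : ℝ, (1 + x ^ 2) ^ (-s)) * Real.Gamma s = Real.sqrt π * Real.Gamma (s - 1/2) := by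
  have hs0 : (0:ℝ) < s := by linarith
  set F : ℝ → ℝ → ℝ := fun x u => u ^ (s - 1) * Real.exp (-((1 + x ^ 2) * u)) with hF
  have hc : ∀ x : ℝ, (0:ℝ) < 1 + x ^ 2 := fun x => by positivity
  -- integrability in u for each x
  have hFint : ∀ x : ℝ, IntegrableOn (fun u => F x u) (Ioi 0) := by
    intro x
    have h := integrableOn_rpow_mul_exp_neg_mul_rpow (p := 1) (s := s - 1) (b := 1 + x ^ 2)
      (by linarith) one_pos (hc x)
    simp only [Real.rpow_one] at h
    convert h using 2 with u
    · rfl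
    · show u ^ (s - 1) * Real.exp (-((1 + x ^ 2) * u)) = _
      rw [neg_mul]
  -- value of inner integral in u
  have hFval : ∀ x : ℝ, ∫ u in Ioi 0, F x u = (1 + x ^ 2) ^ (-s) * Real.Gamma s := by
    intro x
    have h := integral_rpow_mul_exp_neg_mul_Ioi (a := s) (r := 1 + x ^ 2) hs0 (hc x)
    rw [show (fun u => F x u) = fun u : ℝ => u ^ (s - 1) * Real.exp (-((1 + x ^ 2) * u)) from rfl,
      h, one_div, Real.inv_rpow (hc x).le, ← Real.rpow_neg (hc x).le]
  -- nonnegativity on Ioi 0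
  have hFnn : ∀ x : ℝ, ∀ u ∈ Ioi (0:ℝ), 0 ≤ F x u := by
    intro x u hu
    have : (0:ℝ) ≤ u := le_of_lt hu
    positivity
  -- measurability on the product
  have hmeas : AEStronglyMeasurable (Function.uncurry F)
      (volume.prod (volume.restrict (Ioi (0:ℝ)))) := by
    apply Measurable.aestronglyMeasurable
    fun_prop
  -- product integrability
  have hprod : Integrable (Function.uncurry F) (volume.prod (volume.restrict (Ioi (0:ℝ)))) := by
    rw [integrable_prod_iff hmeas]
    refine ⟨Filter.Eventually.of_forall fun x => hFint x, ?_⟩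
    have heq : ∀ x : ℝ, (∫ u in Ioi (0:ℝ), ‖F x u‖) = (1 + x ^ 2) ^ (-s) * Real.Gamma s := by
      intro x
      rw [← hFval x]
      refine setIntegral_congr_fun measurableSet_Ioi fun u hu => ?_
      exact Real.norm_of_nonneg (hFnn x u hu)
    have : (fun x => ∫ y in Ioi (0:ℝ), ‖Function.uncurry F (x, y)‖) =
        fun x : ℝ => (1 + x ^ 2) ^ (-s) * Real.Gamma s := funext heq
    rw [this]
    exact hint.mul_const _
  -- Fubini
  have hswap := integral_integral_swap (f := F) hprod
  -- left side of Fubini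
  have hL : (∫ x : ℝ, ∫ u in Ioi (0:ℝ), F x u) =
      (∫ x : ℝ, (1 + x ^ 2) ^ (-s)) * Real.Gamma s := by
    rw [show (fun x : ℝ => ∫ u in Ioi (0:ℝ), F x u) =
        fun x : ℝ => (1 + x ^ 2) ^ (-s) * Real.Gamma s from funext hFval]
    exact integral_mul_const _ _
  -- right side of Fubini: inner gaussian integral
  have hR1 : ∀ u ∈ Ioi (0:ℝ), (∫ x : ℝ, F x u) =
      Real.sqrt π * (u ^ (s - 1/2 - 1) * Real.exp (-(1 * u))) := by
    intro u hu
    have hu0 : (0:ℝ) < u := hu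
    have h1 : (fun x : ℝ => F x u) =
        fun x : ℝ => (u ^ (s - 1) * Real.exp (-u)) * Real.exp (-u * x ^ 2) := by
      funext x
      rw [hF]
      simp only []
      rw [mul_assoc, ← Real.exp_add]
      ring_nf
    rw [h1, integral_const_mul, integral_gaussian]
    rw [show π / u = π * u⁻¹ by ring, Real.sqrt_mul Real.pi_nonneg,
      Real.sqrt_inv, Real.sqrt_eq_rpow u, ← Real.rpow_neg hu0.le, one_mul,
      show s - 1/2 - 1 = (s - 1) + (-(1/2)) by ring, Real.rpow_add hu0]
    ring
  have hR : (∫ u in Ioi (0:ℝ), ∫ x : ℝ, F x u) = Real.sqrt π * Real.Gamma (s - 1/2) := by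
    rw [setIntegral_congr_fun measurableSet_Ioi hR1, integral_const_mul,
      integral_rpow_mul_exp_neg_mul_Ioi (by linarith : (0:ℝ) < s - 1/2) one_pos]
    norm_num
  rw [← hL, hswap, hR]
/-- For `1 < q < 3`, the unnormalized standard Tsallis q-Gaussian density is integrable on ℝ,
its integral equals `b·√(ν·π)·Γ(ν/2)/Γ((ν+1)/2)` where `b = √(2/(3-q))` and `ν = (3-q)/(q-1)`;
consequently the normalization constant is `C = Γ((ν+1)/2)/(b·√(ν·π)·Γ(ν/2))`. -/
theorem tsallis_qGaussian_integral_one_lt_q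
    (q : ℝ) (hq1 : 1 < q) (hq3 : q < 3)
    (b : ℝ) (hb : b = Real.sqrt (2 / (3 - q)))
    (ν : ℝ) (hν : ν = (3 - q) / (q - 1)) :
    Integrable (fun x : ℝ => (1 + (q - 1) * x ^ 2 / 2) ^ (-(1 : ℝ) / (q - 1))) ∧
    (∫ x : ℝ, (1 + (q - 1) * x ^ 2 / 2) ^ (-(1 : ℝ) / (q - 1)))
      = b * Real.sqrt (ν * π) * Real.Gamma (ν / 2) / Real.Gamma ((ν + 1) / 2) ∧
    (Real.Gamma ((ν + 1) / 2) / (b * Real.sqrt (ν * π) * Real.Gamma (ν / 2))) *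
      (∫ x : ℝ, (1 + (q - 1) * x ^ 2 / 2) ^ (-(1 : ℝ) / (q - 1))) = 1 := by
  have hq : (0:ℝ) < q - 1 := by linarith
  have h3 : (0:ℝ) < 3 - q := by linarith
  set s : ℝ := 1 / (q - 1) with hsdef
  have hs : 1/2 < s := by
    rw [hsdef]
    rw [div_lt_div_iff₀ two_pos hq]
    linarith
  set a : ℝ := Real.sqrt ((q - 1) / 2) with hadef
  have ha0 : 0 < a := Real.sqrt_pos.2 (by positivity)
  have hasq : a ^ 2 = (q - 1) / 2 := Real.sq_sqrt (by positivity)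
  -- rewrite the integrand as a composition
  have hcomp : (fun x : ℝ => (1 + (q - 1) * x ^ 2 / 2) ^ (-(1 : ℝ) / (q - 1))) =
      fun x : ℝ => (1 + (a * x) ^ 2) ^ (-s) := by
    funext x
    rw [mul_pow, hasq, neg_div, ← hsdef]
    ring_nf
  have hgint := my_integrable_one_add_sq_rpow hs
  have hint : Integrable (fun x : ℝ => (1 + (q - 1) * x ^ 2 / 2) ^ (-(1 : ℝ) / (q - 1))) := by
    rw [hcomp]
    exact hgint.comp_mul_left' ha0.ne'
  -- value of the base integral
  have hG : 0 < Real.Gamma s := Real.Gamma_pos_of_pos (by linarith)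
  have hkey := my_key hs hgint
  have hgval : (∫ y : ℝ, (1 + y ^ 2) ^ (-s)) =
      Real.sqrt π * Real.Gamma (s - 1/2) / Real.Gamma s := by
    field_simp at hkey ⊢
    linarith [hkey]
  have hval : (∫ x : ℝ, (1 + (q - 1) * x ^ 2 / 2) ^ (-(1 : ℝ) / (q - 1))) =
      a⁻¹ * (Real.sqrt π * Real.Gamma (s - 1/2) / Real.Gamma s) := by
    rw [hcomp, MeasureTheory.Measure.integral_comp_mul_left (fun y : ℝ => (1 + y ^ 2) ^ (-s)) a,
      hgval, abs_of_pos (inv_pos.2 ha0), smul_eq_mul]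
  -- identify parameters
  have hν2 : ν / 2 = s - 1/2 := by
    rw [hν, hsdef]; field_simp; ring
  have hν1 : (ν + 1) / 2 = s := by
    rw [hν, hsdef]; field_simp; ring
  have hbν : b * Real.sqrt (ν * π) = a⁻¹ * Real.sqrt π := by
    rw [hb, hν, hadef, ← Real.sqrt_inv, ← Real.sqrt_mul (by positivity),
      ← Real.sqrt_mul (by positivity)]
    congr 1
    field_simp
  have hmain : (∫ x : ℝ, (1 + (q - 1) * x ^ 2 / 2) ^ (-(1 : ℝ) / (q - 1)))
      = b * Real.sqrt (ν * π) * Real.Gamma (ν / 2) / Real.Gamma ((ν + 1) / 2) := by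
    rw [hval, hν2, hν1, hbν]
    ring
  refine ⟨hint, hmain, ?_⟩
  rw [hmain]
  have hν0 : 0 < ν := by rw [hν]; positivity
  have hb0 : 0 < b := by rw [hb]; exact Real.sqrt_pos.2 (by positivity)
  have hsν : 0 < Real.sqrt (ν * π) := Real.sqrt_pos.2 (by positivity)
  have hG2 : 0 < Real.Gamma (ν / 2) := Real.Gamma_pos_of_pos (by positivity)
  have hG1 : 0 < Real.Gamma ((ν + 1) / 2) := Real.Gamma_pos_of_pos (by positivity)
  field_simp
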